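/- Let K be a field, S = K[x_1,...,x_n], f_1,...,f_n a K-basis of S_1, and I ⊂ S a graded ideal. Consider S/I with the contraction maps τ_{f^a} on it. For a ∈ ℕ^n with |a| = d < e, the kernel of τ_{f^a}: (S/I)_e → (S/I)_{e-d} equals the intersection over j = 1,...,n of the kernels of τ_{f^{a+ε_j}}: (S/I)_e → (S/I)_{e-d-1}. -/

import Mathlib

open MvPolynomial

attribute [local instance] MvPolynomial.gradedAlgebra

/-- The contraction by a single monomial `x^a`: `τ_{x^a}(x^b) = x^{b-a}` if `a ≤ b`
componentwise, and `0` otherwise, extended `K`-linearly in the argument. -/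
noncomputable def tauMon {K : Type*} [CommSemiring K] {n : ℕ} (a : Fin n →₀ ℕ)
    (l : MvPolynomial (Fin n) K) : MvPolynomial (Fin n) K :=
  ∑ b ∈ l.support, if a ≤ b then monomial (b - a) (l.coeff b) else 0

/-- The contraction `τ_g = ∑_a g_a τ_{x^a}` by a polynomial `g = ∑_a g_a x^a`. -/
noncomputable def tau {K : Type*} [CommSemiring K] {n : ℕ}
    (g l : MvPolynomial (Fin n) K) : MvPolynomial (Fin n) K :=
  ∑ a ∈ g.support, g.coeff a • tauMon a l

section aux
variable {K : Type*} [CommSemiring K] {n : ℕ}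

lemma coeff_tauMon (a : Fin n →₀ ℕ)
    (l : MvPolynomial (Fin n) K) (c : Fin n →₀ ℕ) :
    (tauMon a l).coeff c = l.coeff (c + a) := by
  rw [tauMon, MvPolynomial.coeff_sum, Finset.sum_eq_single (c + a)]
  · simp [le_add_self, coeff_monomial]
  · intro b hb hbne
    split_ifs with h
    · rw [coeff_monomial, if_neg]
      intro hba
      exact hbne (by rw [← hba, tsub_add_cancel_of_le h])
    · simp
  · intro h
    rw [MvPolynomial.notMem_support_iff] at h
    simp [le_add_self, coeff_monomial, h]

lemma tauMon_add (a : Fin n →₀ ℕ) (l m : MvPolynomial (Fin n) K) :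
    tauMon a (l + m) = tauMon a l + tauMon a m := by
  ext c; simp [coeff_tauMon, coeff_add]

lemma tauMon_smul (a : Fin n →₀ ℕ) (r : K) (l : MvPolynomial (Fin n) K) :
    tauMon a (r • l) = r • tauMon a l := by
  ext c; simp [coeff_tauMon]

lemma tauMon_tauMon (a b : Fin n →₀ ℕ) (l : MvPolynomial (Fin n) K) :
    tauMon a (tauMon b l) = tauMon (a + b) l := by
  ext c; simp [coeff_tauMon, add_assoc]

lemma tauMon_zero (a : Fin n →₀ ℕ) : tauMon a (0 : MvPolynomial (Fin n) K) = 0 := by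
  ext c; simp [coeff_tauMon]

lemma tau_eq_sum (g l : MvPolynomial (Fin n) K) :
    tau g l = Finsupp.sum (AddMonoidAlgebra.coeff g) fun a ga => ga • tauMon a l := rfl

lemma tau_monomial (a : Fin n →₀ ℕ) (r : K) (l : MvPolynomial (Fin n) K) :
    tau (monomial a r) l = r • tauMon a l := by
  rw [tau_eq_sum]
  exact Finsupp.sum_single_index (by simp)

lemma tau_add_left (g h l : MvPolynomial (Fin n) K) :
    tau (g + h) l = tau g l + tau h l := by
  rw [tau_eq_sum, tau_eq_sum, tau_eq_sum]
  exact Finsupp.sum_add_index' (by simp) (fun a r s => add_smul r s _)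

lemma tau_zero_left (l : MvPolynomial (Fin n) K) : tau 0 l = 0 := by
  simp [tau]

lemma tau_add_right (g l m : MvPolynomial (Fin n) K) :
    tau g (l + m) = tau g l + tau g m := by
  rw [tau, tau, tau, ← Finset.sum_add_distrib]
  exact Finset.sum_congr rfl fun a _ => by rw [tauMon_add, smul_add]

lemma tau_zero_right (g : MvPolynomial (Fin n) K) : tau g 0 = 0 := by
  simp [tau, tauMon_zero]

lemma tau_smul_left (r : K) (g l : MvPolynomial (Fin n) K) :
    tau (r • g) l = r • tau g l := by
  induction g using MvPolynomial.induction_on' with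
  | monomial a s =>
    rw [smul_monomial, tau_monomial, tau_monomial, smul_smul, smul_eq_mul]
  | add p q hp hq =>
    rw [smul_add, tau_add_left, tau_add_left, hp, hq, smul_add]

lemma tau_mul (g h l : MvPolynomial (Fin n) K) :
    tau (g * h) l = tau g (tau h l) := by
  induction g using MvPolynomial.induction_on' with
  | monomial a r =>
    induction h using MvPolynomial.induction_on' with
    | monomial b s =>
      rw [monomial_mul, tau_monomial, tau_monomial, tau_monomial, tauMon_smul,
        tauMon_tauMon, smul_smul]
    | add p q hp hq =>
      rw [mul_add, tau_add_left, hp, hq, tau_add_left, tau_add_right]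
  | add p q hp hq =>
    rw [add_mul, tau_add_left, hp, hq, tau_add_left]

lemma tau_sum_left {ι : Type*} (s : Finset ι) (g : ι → MvPolynomial (Fin n) K)
    (l : MvPolynomial (Fin n) K) :
    tau (∑ i ∈ s, g i) l = ∑ i ∈ s, tau (g i) l := by
  induction s using Finset.cons_induction with
  | empty => simp [tau_zero_left]
  | cons i s hi ih => rw [Finset.sum_cons, Finset.sum_cons, tau_add_left, ih]

lemma degree_one_eq_single {v : Fin n →₀ ℕ} (hv : v.degree = 1) :
    ∃ i, v = Finsupp.single i 1 := by
  have h1 : Multiset.card v.toMultiset = 1 := by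
    rw [Finsupp.card_toMultiset]; exact hv
  obtain ⟨i, hi⟩ := Multiset.card_eq_one.mp h1
  refine ⟨i, ?_⟩
  have := congrArg Multiset.toFinsupp hi
  rwa [Finsupp.toMultiset_toFinsupp, Multiset.toFinsupp_singleton] at this

lemma mem_span_X {p : MvPolynomial (Fin n) K} (hp : p.IsHomogeneous 1) :
    p ∈ Submodule.span K (Set.range (X : Fin n → MvPolynomial (Fin n) K)) := by
  rw [MvPolynomial.as_sum p]
  apply Submodule.sum_mem
  intro v hv
  have hd : v.degree = 1 := by
    rw [Finsupp.degree_eq_weight_one]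
    exact hp (MvPolynomial.mem_support_iff.mp hv)
  obtain ⟨i, rfl⟩ := degree_one_eq_single hd
  have hXi : (monomial (Finsupp.single i 1)) (coeff (Finsupp.single i 1) p)
      = coeff (Finsupp.single i 1) p • X i := by
    rw [X, smul_monomial, smul_eq_mul, mul_one]
  rw [hXi]
  exact Submodule.smul_mem _ _ (Submodule.subset_span ⟨i, rfl⟩)

end aux

lemma X_mem_span_f {K : Type*} [Field K] {n : ℕ} (f : Fin n → MvPolynomial (Fin n) K)
    (hf1 : ∀ j, (f j).IsHomogeneous 1) (hfb : LinearIndependent K f) (i : Fin n) :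
    (X i : MvPolynomial (Fin n) K) ∈ Submodule.span K (Set.range f) := by
  set W := Submodule.span K (Set.range (X : Fin n → MvPolynomial (Fin n) K)) with hW
  haveI : FiniteDimensional K W := FiniteDimensional.span_of_finite K (Set.finite_range _)
  set f' : Fin n → W := fun j => ⟨f j, mem_span_X (hf1 j)⟩ with hf'
  have hcomp : W.subtype ∘ f' = f := rfl
  have hind : LinearIndependent K f' := LinearIndependent.of_comp W.subtype (hcomp ▸ hfb)
  have hcard : Fintype.card (Fin n) = Module.finrank K W := by
    apply le_antisymm
    · exact hind.fintype_card_le_finrank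
    · simpa [Set.finrank] using finrank_range_le_card (X : Fin n → MvPolynomial (Fin n) K)
  have htop := hind.span_eq_top_of_card_eq_finrank' hcard
  have hXW : (X i : MvPolynomial (Fin n) K) ∈ W := Submodule.subset_span ⟨i, rfl⟩
  have hmem : (⟨X i, hXW⟩ : W) ∈ Submodule.span K (Set.range f') := htop ▸ Submodule.mem_top
  have h2 : (X i : MvPolynomial (Fin n) K) ∈
      Submodule.map W.subtype (Submodule.span K (Set.range f')) := ⟨_, hmem, rfl⟩
  rwa [Submodule.map_span, ← Set.range_comp, hcomp] at h2

/-- Let `I ⊆ S = K[x_1,…,x_n]` be a graded ideal, `f_1,…,f_n` a `K`-basis of `S_1`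
(equivalently, `n` linearly independent linear forms), and view `S/I` as a graded
`K`-vector subspace of `S` via a `K`-linear section `sec` of the projection whose image
is stable under all contractions.  For `a ∈ ℕⁿ` with `|a| = d < e`, the kernel of
`τ_{f^a} : (S/I)_e → (S/I)_{e-d}` equals the intersection of the kernels of the maps
`τ_{f^{a+ε_j}} : (S/I)_e → (S/I)_{e-d-1}`, `j = 1,…,n`. -/
theorem kernel_tau_eq_inter_kernels {K : Type*} [Field K] {n : ℕ}
    (I : Ideal (MvPolynomial (Fin n) K))
    (hI : Ideal.IsHomogeneous (homogeneousSubmodule (Fin n) K) I)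
    (f : Fin n → MvPolynomial (Fin n) K)
    (hf1 : ∀ j, (f j).IsHomogeneous 1)
    (hfb : LinearIndependent K f)
    (sec : (MvPolynomial (Fin n) K ⧸ I) →ₗ[K] MvPolynomial (Fin n) K)
    (hsec : ∀ x, Ideal.Quotient.mk I (sec x) = x)
    (hstable : ∀ (g : MvPolynomial (Fin n) K) (x), ∃ y, sec y = tau g (sec x))
    (a : Fin n →₀ ℕ) (d e : ℕ) (hd : (∑ j, a j) = d) (hde : d < e)
    (x : MvPolynomial (Fin n) K ⧸ I) (hx : (sec x).IsHomogeneous e) :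
    tau (∏ j, f j ^ a j) (sec x) = 0 ↔
      ∀ j : Fin n, tau (∏ k, f k ^ (((a + Finsupp.single j 1 : Fin n →₀ ℕ)) k)) (sec x) = 0 := by
  set l := sec x with hl
  set F := ∏ j, f j ^ a j with hF
  have hprod : ∀ j : Fin n,
      (∏ k, f k ^ ((a + Finsupp.single j 1 : Fin n →₀ ℕ) k)) = f j * F := by
    intro j
    have h1 : ∀ k : Fin n, (a + Finsupp.single j 1 : Fin n →₀ ℕ) k
        = a k + (Finsupp.single j 1 : Fin n →₀ ℕ) k := fun k => rfl
    calc (∏ k, f k ^ ((a + Finsupp.single j 1 : Fin n →₀ ℕ) k))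
        = ∏ k, f k ^ a k * f k ^ ((Finsupp.single j 1 : Fin n →₀ ℕ) k) := by
          simp_rw [h1, pow_add]
      _ = F * ∏ k, f k ^ ((Finsupp.single j 1 : Fin n →₀ ℕ) k) := by
          rw [Finset.prod_mul_distrib]
      _ = F * f j := by
          congr 1
          rw [Finset.prod_eq_single j]
          · simp
          · intro k _ hk
            rw [Finsupp.single_eq_of_ne' (Ne.symm hk), pow_zero]
          · simp
      _ = f j * F := mul_comm _ _
  have hFhom : F.IsHomogeneous d := by
    rw [← hd, hF]
    have := MvPolynomial.IsHomogeneous.prod Finset.univ (fun j => f j ^ a j)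
      (fun j => a j) (fun j _ => by simpa using (hf1 j).pow (a j))
    simpa using this
  constructor
  · intro h j
    rw [hprod j, tau_mul, h, tau_zero_right]
  · intro h
    have hu : ∀ j, tau (f j) (tau F l) = 0 := by
      intro j
      rw [← tau_mul, ← hprod j]
      exact h j
    ext b
    rw [MvPolynomial.coeff_zero]
    by_cases hb : b = 0
    · subst hb
      rw [tau, MvPolynomial.coeff_sum]
      apply Finset.sum_eq_zero
      intro a' ha'
      have hdeg : a'.degree = d := by
        rw [Finsupp.degree_eq_weight_one]
        exact hFhom (MvPolynomial.mem_support_iff.mp ha')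
      rw [MvPolynomial.coeff_smul, coeff_tauMon, zero_add,
        hx.coeff_eq_zero (by omega), smul_zero]
    · obtain ⟨i, hi⟩ : ∃ i, b i ≠ 0 := by
        by_contra hc
        push_neg at hc
        exact hb (Finsupp.ext hc)
      have hle : Finsupp.single i 1 ≤ b := by
        rw [Finsupp.single_le_iff]
        omega
      have hXi : tau (X i) (tau F l) = 0 := by
        obtain ⟨c, hc⟩ := (Submodule.mem_span_range_iff_exists_fun K).mp
          (X_mem_span_f f hf1 hfb i)
        rw [← hc, tau_sum_left]
        apply Finset.sum_eq_zero
        intro j _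
        rw [tau_smul_left, hu j, smul_zero]
      have hXi' : tau (X i) (tau F l) = tauMon (Finsupp.single i 1) (tau F l) := by
        rw [X, tau_monomial, one_smul]
      have := congrArg (fun p => MvPolynomial.coeff (b - Finsupp.single i 1) p)
        (hXi'.symm.trans hXi)
      simpa [coeff_tauMon, tsub_add_cancel_of_le hle] using this
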